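/- Let G be a connected multigraph. Then any two distinct λ-atoms of G are disjoint. -/

import Mathlib

/-- A multigraph: multiple edges allowed (recorded as edge multiplicities), no loops. -/
structure Multigraph (V : Type*) where
  mult : V → V → ℕ
  symm : ∀ u v, mult u v = mult v u
  loopless : ∀ v, mult v v = 0

namespace Multigraph

variable {V : Type*}

/-- Adjacency: at least one edge between `u` and `v`. -/
def Adj (G : Multigraph V) (u v : V) : Prop := 0 < G.mult u v

instance (G : Multigraph V) (v : V) : DecidablePred (G.Adj v) :=
  fun u => inferInstanceAs (Decidable (0 < G.mult v u))

/-- Reachability by walks. -/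
def Reachable (G : Multigraph V) : V → V → Prop := Relation.ReflTransGen G.Adj

/-- A multigraph is connected if it is nonempty and every two vertices are joined by a walk. -/
def Connected (G : Multigraph V) : Prop := Nonempty V ∧ ∀ u v, G.Reachable u v

/-- An automorphism of a multigraph: a permutation preserving all edge multiplicities. -/
def Aut (G : Multigraph V) : Type _ :=
  {e : Equiv.Perm V // ∀ u v, G.mult (e u) (e v) = G.mult u v}

/-- A set of edges of `G`, given by sub-multiplicities. -/
structure EdgeSub (G : Multigraph V) where
  f : V → V → ℕ
  symm : ∀ u v, f u v = f v u
  le : ∀ u v, f u v ≤ G.mult u v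

/-- The multigraph obtained by deleting the edge set `F`. -/
def deleteEdges (G : Multigraph V) (F : G.EdgeSub) : Multigraph V where
  mult u v := G.mult u v - F.f u v
  symm u v := by rw [G.symm u v, F.symm u v]
  loopless v := by simp [G.loopless v]

/-- `F` is an edge-cut if removing it disconnects `G`. -/
def IsEdgeCut (G : Multigraph V) (F : G.EdgeSub) : Prop := ¬ (G.deleteEdges F).Connected

/-- `F` is a restricted edge-cut if removing it disconnects `G` and leaves no isolated vertex. -/
def IsRestrictedEdgeCut (G : Multigraph V) (F : G.EdgeSub) : Prop :=
  G.IsEdgeCut F ∧ ∀ v, ∃ u, (G.deleteEdges F).Adj v u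

/-- `G` is bipartite with parts `V₁`, `V₂`. -/
def IsBipartition [DecidableEq V] [Fintype V] (G : Multigraph V) (V₁ V₂ : Finset V) : Prop :=
  Disjoint V₁ V₂ ∧ V₁ ∪ V₂ = Finset.univ ∧ ∀ u v, G.Adj u v → (u ∈ V₁ ↔ v ∈ V₂)

/-- A bipartite multigraph is half-transitive if `Aut G` is transitive on each part. -/
def IsHalfTransitive [DecidableEq V] [Fintype V] (G : Multigraph V) (V₁ V₂ : Finset V) : Prop :=
  G.IsBipartition V₁ V₂ ∧
  (∀ u ∈ V₁, ∀ v ∈ V₁, ∃ e : G.Aut, e.1 u = v) ∧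
  (∀ u ∈ V₂, ∀ v ∈ V₂, ∃ e : G.Aut, e.1 u = v)

/-- An imprimitive block for `Aut G`. -/
def IsImprimitiveBlock [DecidableEq V] (G : Multigraph V) (A : Finset V) [Fintype V] : Prop :=
  A.Nonempty ∧ A ≠ Finset.univ ∧
  ∀ e : G.Aut, A.image e.1 = A ∨ Disjoint (A.image e.1) A

/-- The induced sub-multigraph on a vertex set `S`. -/
def induce (G : Multigraph V) (S : Finset V) : Multigraph {x // x ∈ S} where
  mult a b := G.mult a.1 b.1
  symm a b := G.symm a.1 b.1
  loopless a := G.loopless a.1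

section Fin

variable [Fintype V] [DecidableEq V]

/-- The degree of a vertex (counting multiplicities). -/
def degree (G : Multigraph V) (v : V) : ℕ := ∑ u, G.mult v u

/-- The minimum degree `δ(G)`. -/
noncomputable def minDegree (G : Multigraph V) : ℕ := sInf {n | ∃ v, G.degree v = n}

/-- The maximum edge multiplicity `μ(G)`. -/
def maxMult (G : Multigraph V) : ℕ := Finset.univ.sup fun p : V × V => G.mult p.1 p.2

/-- `d(A)`: the number of edges between `A` and its complement. -/
def cut (G : Multigraph V) (A : Finset V) : ℕ := ∑ u ∈ A, ∑ v ∈ Aᶜ, G.mult u v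

/-- The number of edges in an edge set. -/
def EdgeSub.card {G : Multigraph V} (F : G.EdgeSub) : ℕ := (∑ u, ∑ v, F.f u v) / 2

/-- The edge-boundary `N(A)` of a vertex set `A`, as an edge set. -/
def boundary (G : Multigraph V) (A : Finset V) : G.EdgeSub where
  f u v := if (u ∈ A ∧ v ∉ A) ∨ (v ∈ A ∧ u ∉ A) then G.mult u v else 0
  symm u v := by
    by_cases h1 : u ∈ A <;> by_cases h2 : v ∈ A <;> simp [h1, h2, G.symm u v]
  le u v := by split_ifs <;> simp

/-- The edge-connectivity `λ(G)`. -/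
noncomputable def edgeConn (G : Multigraph V) : ℕ :=
  sInf {n | ∃ F : G.EdgeSub, G.IsEdgeCut F ∧ F.card = n}

/-- The restricted edge-connectivity `λ'(G)`. -/
noncomputable def rEdgeConn (G : Multigraph V) : ℕ :=
  sInf {n | ∃ F : G.EdgeSub, G.IsRestrictedEdgeCut F ∧ F.card = n}

/-- The minimum edge degree `ξ(G) = min {d(u)+d(v)-2μ(uv) : uv ∈ E}`. -/
noncomputable def minEdgeDegree (G : Multigraph V) : ℕ :=
  sInf {n | ∃ u v, G.Adj u v ∧ n = G.degree u + G.degree v - 2 * G.mult u v}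

/-- A `λ`-fragment: a vertex set whose edge-boundary is a minimum edge-cut. -/
def IsFragment (G : Multigraph V) (A : Finset V) : Prop :=
  A.Nonempty ∧ Aᶜ.Nonempty ∧ G.IsEdgeCut (G.boundary A) ∧ G.cut A = G.edgeConn

/-- A `λ`-atom: a `λ`-fragment of minimum cardinality. -/
def IsAtom (G : Multigraph V) (A : Finset V) : Prop :=
  G.IsFragment A ∧ ∀ B : Finset V, G.IsFragment B → A.card ≤ B.card

/-- A strict `λ`-fragment: a `λ`-fragment `C` with `2 ≤ |C| ≤ |V| - 2`. -/
def IsStrictFragment (G : Multigraph V) (A : Finset V) : Prop :=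
  G.IsFragment A ∧ 2 ≤ A.card ∧ A.card ≤ Fintype.card V - 2

/-- A `λ`-superatom: a strict `λ`-fragment of minimum cardinality. -/
def IsSuperAtom (G : Multigraph V) (A : Finset V) : Prop :=
  G.IsStrictFragment A ∧ ∀ B : Finset V, G.IsStrictFragment B → A.card ≤ B.card

/-- A `λ'`-fragment: a vertex set whose edge-boundary is a minimum restricted edge-cut. -/
def IsRFragment (G : Multigraph V) (A : Finset V) : Prop :=
  G.IsRestrictedEdgeCut (G.boundary A) ∧ G.cut A = G.rEdgeConn

/-- A `λ'`-atom: a `λ'`-fragment of minimum cardinality. -/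
def IsRAtom (G : Multigraph V) (A : Finset V) : Prop :=
  G.IsRFragment A ∧ ∀ B : Finset V, G.IsRFragment B → A.card ≤ B.card

/-- `G` is super edge-connected if every minimum edge-cut is the set of all edges
incident with some vertex. -/
def IsSuperEdgeConnected (G : Multigraph V) : Prop :=
  ∀ F : G.EdgeSub, G.IsEdgeCut F → F.card = G.edgeConn →
    ∃ v : V, ∀ u w : V, F.f u w = if u = v ∨ w = v then G.mult u w else 0

end Fin

end Multigraph

variable {V : Type*} [Fintype V] [DecidableEq V]

open Multigraph



namespace Multigraph

variable {V : Type*} [Fintype V] [DecidableEq V]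

lemma cut_eq_sum (G : Multigraph V) (S : Finset V) :
    G.cut S = ∑ u, ∑ v, if u ∈ S ∧ v ∉ S then G.mult u v else 0 := by
  unfold cut
  calc ∑ u ∈ S, ∑ v ∈ Sᶜ, G.mult u v
      = ∑ u ∈ S, ∑ v, if v ∉ S then G.mult u v else 0 := by
        refine Finset.sum_congr rfl fun u hu => ?_
        rw [← Finset.sum_filter]
        congr 1; ext v; simp
    _ = ∑ u, if u ∈ S then ∑ v, if v ∉ S then G.mult u v else 0 else 0 := by
        rw [← Finset.sum_filter]
        congr 1; ext u; simp
    _ = _ := by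
        refine Finset.sum_congr rfl fun u _ => ?_
        by_cases hu : u ∈ S <;> simp [hu]

lemma cut_eq_sum' (G : Multigraph V) (S : Finset V) :
    G.cut S = ∑ u, ∑ v, if v ∈ S ∧ u ∉ S then G.mult u v else 0 := by
  rw [cut_eq_sum, Finset.sum_comm]
  exact Finset.sum_congr rfl fun u _ => Finset.sum_congr rfl fun v _ => by
    rw [G.symm v u]

lemma two_mul_cut (G : Multigraph V) (S : Finset V) :
    2 * G.cut S = ∑ u, ∑ v, ((if u ∈ S ∧ v ∉ S then G.mult u v else 0)
      + (if v ∈ S ∧ u ∉ S then G.mult u v else 0)) := by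
  rw [two_mul]
  nth_rewrite 1 [cut_eq_sum G S]
  rw [cut_eq_sum' G S, ← Finset.sum_add_distrib]
  exact Finset.sum_congr rfl fun u _ => (Finset.sum_add_distrib).symm

lemma cut_sdiff_add (G : Multigraph V) (A B : Finset V) :
    G.cut (A \ B) + G.cut (B \ A) ≤ G.cut A + G.cut B := by
  have key : 2 * (G.cut (A \ B) + G.cut (B \ A)) ≤ 2 * (G.cut A + G.cut B) := by
    rw [mul_add, mul_add, two_mul_cut, two_mul_cut, two_mul_cut, two_mul_cut,
      ← Finset.sum_add_distrib, ← Finset.sum_add_distrib]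
    refine Finset.sum_le_sum fun u _ => ?_
    rw [← Finset.sum_add_distrib, ← Finset.sum_add_distrib]
    refine Finset.sum_le_sum fun v _ => ?_
    by_cases h1 : u ∈ A <;> by_cases h2 : u ∈ B <;> by_cases h3 : v ∈ A <;>
      by_cases h4 : v ∈ B <;> simp [Finset.mem_sdiff, h1, h2, h3, h4]
  omega

lemma boundary_card (G : Multigraph V) (S : Finset V) :
    (G.boundary S).card = G.cut S := by
  have h : ∑ u, ∑ v, (G.boundary S).f u v = 2 * G.cut S := by
    rw [two_mul_cut]
    refine Finset.sum_congr rfl fun u _ => Finset.sum_congr rfl fun v _ => ?_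
    show (if (u ∈ S ∧ v ∉ S) ∨ (v ∈ S ∧ u ∉ S) then G.mult u v else 0) = _
    by_cases h1 : u ∈ S <;> by_cases h2 : v ∈ S <;> simp [h1, h2]
  show (∑ u, ∑ v, (G.boundary S).f u v) / 2 = G.cut S
  rw [h]; omega

lemma boundary_isEdgeCut (G : Multigraph V) (S : Finset V)
    (hS : S.Nonempty) (hSc : Sᶜ.Nonempty) : G.IsEdgeCut (G.boundary S) := by
  intro hconn
  obtain ⟨u, hu⟩ := hS
  obtain ⟨v, hv⟩ := hSc
  have step : ∀ b c, (G.deleteEdges (G.boundary S)).Adj b c → (b ∈ S ↔ c ∈ S) := by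
    intro b c h
    have hadj : 0 < G.mult b c - (G.boundary S).f b c := h
    by_cases hb : b ∈ S <;> by_cases hc : c ∈ S <;> simp_all [Multigraph.boundary]
  have key : ∀ a b, (G.deleteEdges (G.boundary S)).Reachable a b → (a ∈ S ↔ b ∈ S) := by
    intro a b hab
    induction hab with
    | refl => exact Iff.rfl
    | tail _ h2 ih => exact ih.trans (step _ _ h2)
  have hvS := (key u v (hconn.2 u v)).mp hu
  rw [Finset.mem_compl] at hv
  exact hv hvS

lemma edgeConn_le_cut (G : Multigraph V) (S : Finset V)
    (hS : S.Nonempty) (hSc : Sᶜ.Nonempty) : G.edgeConn ≤ G.cut S :=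
  Nat.sInf_le ⟨G.boundary S, boundary_isEdgeCut G S hS hSc, boundary_card G S⟩

end Multigraph

/-- Any two distinct `λ`-atoms of a connected multigraph are disjoint. -/
theorem atoms_disjoint (G : Multigraph V) (hG : G.Connected) (A B : Finset V)
    (hA : G.IsAtom A) (hB : G.IsAtom B) (hAB : A ≠ B) :
    Disjoint A B := by
  by_contra hdis
  rw [Finset.not_disjoint_iff] at hdis
  obtain ⟨x, hxA, hxB⟩ := hdis
  have hcard : A.card = B.card := le_antisymm (hA.2 B hB.1) (hB.2 A hA.1)
  have hABne : (A \ B).Nonempty := by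
    rw [Finset.sdiff_nonempty]
    intro hsub
    exact hAB (Finset.eq_of_subset_of_card_le hsub hcard.ge)
  have hBAne : (B \ A).Nonempty := by
    rw [Finset.sdiff_nonempty]
    intro hsub
    exact hAB (Finset.eq_of_subset_of_card_le hsub hcard.le).symm
  have hc1 : (A \ B)ᶜ.Nonempty := ⟨x, by simp [hxB]⟩
  have hc2 : (B \ A)ᶜ.Nonempty := ⟨x, by simp [hxA]⟩
  have l1 := Multigraph.edgeConn_le_cut G (A \ B) hABne hc1
  have l2 := Multigraph.edgeConn_le_cut G (B \ A) hBAne hc2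
  have hsub := Multigraph.cut_sdiff_add G A B
  rw [hA.1.2.2.2, hB.1.2.2.2] at hsub
  have hfrag : G.IsFragment (A \ B) :=
    ⟨hABne, hc1, Multigraph.boundary_isEdgeCut G (A \ B) hABne hc1, by omega⟩
  have hge := hA.2 _ hfrag
  have hlt : (A \ B).card < A.card :=
    Finset.card_lt_card ((Finset.ssubset_iff_of_subset Finset.sdiff_subset).mpr
      ⟨x, hxA, by simp [hxB]⟩)
  omega
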